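/- Let n ≥ 1, μ ∈ ℝ, and c, γ ∈ ℝⁿ with |c|² = 1 − μ², ⟨c,γ⟩ = 0, and |γ|² = (1−μ)/2. Define F : ℝ² → ℝ^{n+1} by F(x,y) = (x² + μy², c¹y² + 2γ¹xy, …, cⁿy² + 2γⁿxy). Then for all (x,y) ∈ ℝ²: (i) |DF(x,y)|² = 2(3−μ)(x²+y²); and (ii) the Euclidean Laplacian ΔF is the constant vector (2+2μ, 2c¹, …, 2cⁿ), so |ΔF|² = 8(1+μ). Consequently, the two conditions |DF(x,y)|² = 6(x²+y²) for all (x,y) and |ΔF|² = 8 hold if and only if μ = 0. -/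

import Mathlib

/-!
STATEMENT 11: For n ≥ 1, μ ∈ ℝ, c, γ ∈ ℝⁿ with |c|² = 1−μ², ⟨c,γ⟩ = 0,
|γ|² = (1−μ)/2, and F(x,y) = (x² + μy², c¹y² + 2γ¹xy, …, cⁿy² + 2γⁿxy):
(i) |DF(x,y)|² = 2(3−μ)(x²+y²);
(ii) ΔF is the constant vector (2+2μ, 2c¹, …, 2cⁿ), so |ΔF|² = 8(1+μ).
Consequently |DF|² = 6(x²+y²) everywhere and |ΔF|² = 8 hold iff μ = 0.
-/

/-- The componentwise Euclidean Laplacian of a map `ℝ² → ℝᵐ`,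
`Δf = ∂²f/∂x² + ∂²f/∂y²`. -/
noncomputable def lap2 {m : ℕ} (f : ℝ → ℝ → Fin m → ℝ) (x y : ℝ) : Fin m → ℝ :=
  fun i => iteratedDeriv 2 (fun x' => f x' y i) x + iteratedDeriv 2 (fun y' => f x y' i) y

/-- Squared Frobenius norm of the total derivative of a map `ℝ² → ℝᵐ`:
the sum of the squares of all first partial derivatives of all components. -/
noncomputable def frob2 {m : ℕ} (f : ℝ → ℝ → Fin m → ℝ) (x y : ℝ) : ℝ :=
  ∑ i, ((deriv (fun x' => f x' y i) x) ^ 2 + (deriv (fun y' => f x y' i) y) ^ 2)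

private lemma h0x (μ y x : ℝ) : HasDerivAt (fun x' : ℝ => x' ^ 2 + μ * y ^ 2) (2 * x) x := by
  simpa using (hasDerivAt_pow 2 x).add_const (μ * y ^ 2)

private lemma h0y (μ x y : ℝ) : HasDerivAt (fun y' : ℝ => x ^ 2 + μ * y' ^ 2) (2 * μ * y) y := by
  have := ((hasDerivAt_pow 2 y).const_mul μ).const_add (x ^ 2)
  simpa [mul_comm, mul_assoc, mul_left_comm] using this

private lemma hjx (a b y x : ℝ) :
    HasDerivAt (fun x' : ℝ => a * y ^ 2 + 2 * b * x' * y) (2 * b * y) x := by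
  have := (((hasDerivAt_id x).const_mul (2 * b)).mul_const y).const_add (a * y ^ 2)
  simpa using this

private lemma hjy (a b x y : ℝ) :
    HasDerivAt (fun y' : ℝ => a * y' ^ 2 + 2 * b * x * y') (2 * a * y + 2 * b * x) y := by
  have := (((hasDerivAt_pow 2 y).const_mul a).add ((hasDerivAt_id y).const_mul (2 * b * x)))
  simpa [mul_comm, mul_assoc, mul_left_comm, Pi.add_def] using this

private lemma i0x (μ y x : ℝ) : iteratedDeriv 2 (fun x' : ℝ => x' ^ 2 + μ * y ^ 2) x = 2 := by
  rw [show (2:ℕ) = 1 + 1 from rfl, iteratedDeriv_succ, iteratedDeriv_one]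
  have : (deriv fun x' : ℝ => x' ^ 2 + μ * y ^ 2) = fun x' => 2 * x' :=
    funext fun t => (h0x μ y t).deriv
  rw [this]
  simpa using ((hasDerivAt_id x).const_mul 2).deriv

private lemma i0y (μ x y : ℝ) : iteratedDeriv 2 (fun y' : ℝ => x ^ 2 + μ * y' ^ 2) y = 2 * μ := by
  rw [show (2:ℕ) = 1 + 1 from rfl, iteratedDeriv_succ, iteratedDeriv_one]
  have : (deriv fun y' : ℝ => x ^ 2 + μ * y' ^ 2) = fun y' => 2 * μ * y' :=
    funext fun t => (h0y μ x t).deriv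
  rw [this]
  simpa using ((hasDerivAt_id y).const_mul (2 * μ)).deriv

private lemma ijx (a b y x : ℝ) :
    iteratedDeriv 2 (fun x' : ℝ => a * y ^ 2 + 2 * b * x' * y) x = 0 := by
  rw [show (2:ℕ) = 1 + 1 from rfl, iteratedDeriv_succ, iteratedDeriv_one]
  have : (deriv fun x' : ℝ => a * y ^ 2 + 2 * b * x' * y) = fun _ => 2 * b * y :=
    funext fun t => (hjx a b y t).deriv
  rw [this, deriv_const]

private lemma ijy (a b x y : ℝ) :
    iteratedDeriv 2 (fun y' : ℝ => a * y' ^ 2 + 2 * b * x * y') y = 2 * a := by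
  rw [show (2:ℕ) = 1 + 1 from rfl, iteratedDeriv_succ, iteratedDeriv_one]
  have : (deriv fun y' : ℝ => a * y' ^ 2 + 2 * b * x * y') = fun t => 2 * a * t + 2 * b * x :=
    funext fun t => (hjy a b x t).deriv
  rw [this]
  simpa using (((hasDerivAt_id y).const_mul (2 * a)).add_const (2 * b * x)).deriv

theorem stmt11 (n : ℕ) (hn : 1 ≤ n) (μ : ℝ) (c γ : Fin n → ℝ)
    (hc : ∑ j, (c j) ^ 2 = 1 - μ ^ 2)
    (hcγ : ∑ j, c j * γ j = 0)
    (hγ : ∑ j, (γ j) ^ 2 = (1 - μ) / 2)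
    (F : ℝ → ℝ → Fin (n + 1) → ℝ)
    (hF : ∀ x y, F x y =
      Fin.cons (x ^ 2 + μ * y ^ 2) (fun i => c i * y ^ 2 + 2 * γ i * x * y)) :
    (∀ x y : ℝ, frob2 F x y = 2 * (3 - μ) * (x ^ 2 + y ^ 2)) ∧
    (∀ x y : ℝ, lap2 F x y = Fin.cons (2 + 2 * μ) (fun i => 2 * c i)) ∧
    (∀ x y : ℝ, ∑ i, (lap2 F x y i) ^ 2 = 8 * (1 + μ)) ∧
    (((∀ x y : ℝ, frob2 F x y = 6 * (x ^ 2 + y ^ 2)) ∧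
        (∀ x y : ℝ, ∑ i, (lap2 F x y i) ^ 2 = 8)) ↔ μ = 0) := by
  have hfrob : ∀ x y : ℝ, frob2 F x y = 2 * (3 - μ) * (x ^ 2 + y ^ 2) := by
    intro x y
    unfold frob2
    rw [Fin.sum_univ_succ]
    simp only [hF, Fin.cons_zero, Fin.cons_succ]
    rw [(h0x μ y x).deriv, (h0y μ x y).deriv]
    have hrest : ∀ j : Fin n,
        (deriv (fun x' => c j * y ^ 2 + 2 * γ j * x' * y) x) ^ 2 +
        (deriv (fun y' => c j * y' ^ 2 + 2 * γ j * x * y') y) ^ 2 =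
        (2 * γ j * y) ^ 2 + (2 * c j * y + 2 * γ j * x) ^ 2 := by
      intro j
      rw [(hjx (c j) (γ j) y x).deriv, (hjy (c j) (γ j) x y).deriv]
    rw [Finset.sum_congr rfl fun j _ => hrest j]
    have expand : ∀ j : Fin n,
        (2 * γ j * y) ^ 2 + (2 * c j * y + 2 * γ j * x) ^ 2 =
        (4 * y ^ 2 + 4 * x ^ 2) * (γ j) ^ 2 + (4 * y ^ 2) * (c j) ^ 2 +
          (8 * x * y) * (c j * γ j) := by
      intro j; ring
    rw [Finset.sum_congr rfl fun j _ => expand j]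
    rw [Finset.sum_add_distrib, Finset.sum_add_distrib,
      ← Finset.mul_sum, ← Finset.mul_sum, ← Finset.mul_sum, hc, hcγ, hγ]
    ring
  have hlap : ∀ x y : ℝ, lap2 F x y = Fin.cons (2 + 2 * μ) (fun i => 2 * c i) := by
    intro x y
    funext i
    unfold lap2
    refine Fin.cases ?_ (fun j => ?_) i
    · simp only [hF, Fin.cons_zero]
      rw [i0x μ y x, i0y μ x y]
    · simp only [hF, Fin.cons_succ]
      rw [ijx (c j) (γ j) y x, ijy (c j) (γ j) x y]; ring
  have hlapsq : ∀ x y : ℝ, ∑ i, (lap2 F x y i) ^ 2 = 8 * (1 + μ) := by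
    intro x y
    rw [hlap x y, Fin.sum_univ_succ]
    simp only [Fin.cons_zero, Fin.cons_succ]
    have : ∀ j : Fin n, (2 * c j) ^ 2 = 4 * (c j) ^ 2 := fun j => by ring
    rw [Finset.sum_congr rfl fun j _ => this j, ← Finset.mul_sum, hc]
    ring
  refine ⟨hfrob, hlap, hlapsq, ?_, ?_⟩
  · rintro ⟨h1, _⟩
    have := (hfrob 1 0).symm.trans (h1 1 0)
    nlinarith [this]
  · rintro rfl
    refine ⟨fun x y => ?_, fun x y => ?_⟩
    · rw [hfrob]; ring
    · rw [hlapsq]; ring
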